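/- Let X be a locally efficient allocation and for each agent i let ℓ(i) be the maximum weight of a (possibly empty) directed path starting at i in the envy graph G_X. Then setting p_i = ℓ(i) for all i gives an envy-free outcome, i.e., v_i(X_i) + ℓ(i) ≥ v_i(X_j) + ℓ(j) for all agents i, j. -/

import Mathlib

open Finset

/-- The set of total weights of (possibly empty) directed paths starting at vertex `i`
in the complete weighted digraph on `Fin n` with arc weights `w`. A path is an injective
sequence of vertices starting at `i`. -/
def pathWeightsFrom {n : ℕ} (w : Fin n → Fin n → ℝ) (i : Fin n) : Set ℝ :=
  {x | ∃ (k : ℕ) (c : Fin (k + 1) → Fin n), Function.Injective c ∧ c 0 = i ∧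
    x = ∑ j : Fin k, w (c j.castSucc) (c j.succ)}

/-- Any sum of arc weights along a sequence injective on `{0, ..., k}` is a path weight. -/
lemma mem_pwf {n : ℕ} (w : Fin n → Fin n → ℝ) (k : ℕ) (d : ℕ → Fin n)
    (hinj : ∀ a b, a ≤ k → b ≤ k → d a = d b → a = b) :
    (∑ s ∈ Finset.range k, w (d s) (d (s+1))) ∈ pathWeightsFrom w (d 0) := by
  refine ⟨k, fun s => d s, ?_, rfl, ?_⟩
  · intro a b h
    exact Fin.ext (hinj a b (Nat.lt_succ_iff.mp a.isLt) (Nat.lt_succ_iff.mp b.isLt) h)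
  · rw [Finset.sum_range fun s => w (d s) (d (s+1))]
    rfl

/-- Local efficiency implies every directed cycle in the envy graph has nonpositive weight. -/
lemma cycle_nonpos {n m : ℕ} (v : Fin n → Finset (Fin m) → ℝ) (X : Fin n → Finset (Fin m))
    (hLE : ∀ π : Equiv.Perm (Fin n), ∑ i, v (π i) (X i) ≤ ∑ i, v i (X i))
    (k : ℕ) (d : ℕ → Fin n)
    (hinj : ∀ a b, a ≤ k → b ≤ k → d a = d b → a = b) :
    (∑ s ∈ Finset.range k, (v (d s) (X (d (s+1))) - v (d s) (X (d s)))) +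
      (v (d k) (X (d 0)) - v (d k) (X (d k))) ≤ 0 := by
  set f : Fin (k+1) ↪ Fin n := ⟨fun s => d s, fun a b h =>
    Fin.ext (hinj a b (Nat.lt_succ_iff.mp a.isLt) (Nat.lt_succ_iff.mp b.isLt) h)⟩ with hf
  set e : Equiv.Perm (Fin (k+1)) := (finRotate (k+1))⁻¹ with he
  set π : Equiv.Perm (Fin n) := e.viaFintypeEmbedding f with hπ
  have h0 : ∑ i, (v (π i) (X i) - v i (X i)) ≤ 0 := by
    rw [Finset.sum_sub_distrib, sub_nonpos]
    exact hLE π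
  have h1 : ∑ i, (v (π i) (X i) - v i (X i))
      = ∑ s : Fin (k+1), (v (π (f s)) (X (f s)) - v (f s) (X (f s))) := by
    refine ((Finset.sum_subset (Finset.subset_univ (Finset.univ.image f)) ?_).symm).trans
      (Finset.sum_image ?_)
    · intro x _ hx
      rw [Equiv.Perm.viaFintypeEmbedding_apply_notMem_range]
      · simp
      · intro ⟨a, ha⟩
        exact hx (Finset.mem_image.mpr ⟨a, Finset.mem_univ _, ha⟩)
    · intro a _ b _ h
      exact f.injective h
  have h2 : ∀ s : Fin (k+1), π (f s) = f (e s) :=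
    fun s => Equiv.Perm.viaFintypeEmbedding_apply_image e f s
  rw [h1] at h0
  simp only [h2] at h0
  have h3 : ∑ s : Fin (k+1), v (f (e s)) (X (f s))
      = ∑ r : Fin (k+1), v (f r) (X (f (finRotate (k+1) r))) := by
    rw [← Equiv.sum_comp (finRotate (k+1)) (fun s => v (f (e s)) (X (f s)))]
    apply Finset.sum_congr rfl
    intro x _
    have hx : e (finRotate (k+1) x) = x := by
      rw [he]; exact Equiv.symm_apply_apply _ _
    simp only [hx]
  rw [Finset.sum_sub_distrib, h3, ← Finset.sum_sub_distrib] at h0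
  have h4 : ∑ r : Fin (k+1), (v (f r) (X (f (finRotate (k+1) r))) - v (f r) (X (f r)))
      = (∑ s ∈ Finset.range k, (v (d s) (X (d (s+1))) - v (d s) (X (d s)))) +
      (v (d k) (X (d 0)) - v (d k) (X (d k))) := by
    rw [Fin.sum_univ_castSucc]
    congr 1
    · rw [Finset.sum_range fun s => (v (d s) (X (d (s+1))) - v (d s) (X (d s)))]
      apply Finset.sum_congr rfl
      intro q _
      have : finRotate (k+1) q.castSucc = q.succ := by
        rw [finRotate_succ_apply, Fin.coeSucc_eq_succ]
      rw [this]
      rfl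
    · rw [finRotate_last]
      rfl
  rw [h4] at h0
  exact h0

/-- For a locally efficient allocation, setting each agent's subsidy to the weight
`ℓ i` of the heaviest path starting at `i` in the envy graph yields envy-freeness. -/
theorem heaviest_path_subsidy_envy_free (n m : ℕ)
    (v : Fin n → Finset (Fin m) → ℝ)
    (hmono : ∀ i, ∀ S T : Finset (Fin m), S ⊆ T → v i S ≤ v i T)
    (hnorm : ∀ i, v i ∅ = 0)
    (X : Fin n → Finset (Fin m))
    (hdisj : ∀ i j, i ≠ j → Disjoint (X i) (X j))
    (hcover : (Finset.univ : Finset (Fin n)).biUnion X = Finset.univ)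
    (hLE : ∀ π : Equiv.Perm (Fin n), ∑ i, v (π i) (X i) ≤ ∑ i, v i (X i))
    (ℓ : Fin n → ℝ)
    (hℓ : ∀ i, IsGreatest (pathWeightsFrom (fun i k => v i (X k) - v i (X i)) i) (ℓ i)) :
    ∀ i j, v i (X j) + ℓ j ≤ v i (X i) + ℓ i := by
  intro i j
  set w : Fin n → Fin n → ℝ := fun a b => v a (X b) - v a (X a) with hw
  obtain ⟨⟨k, c, hcinj, hc0, hsum⟩, -⟩ := hℓ j
  set d : ℕ → Fin n := fun s => c ⟨min s k, by omega⟩ with hd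
  have hdinj : ∀ a b, a ≤ k → b ≤ k → d a = d b → a = b := by
    intro a b ha hb h
    have h2 : min a k = min b k := Fin.mk.inj_iff.mp (hcinj h)
    omega
  have hd0 : d 0 = j := by
    rw [← hc0, hd]
    congr 1
  have hdc : ∀ (a : ℕ) (h : a < k + 1), d a = c ⟨a, h⟩ := by
    intro a h
    show c ⟨min a k, _⟩ = c ⟨a, h⟩
    exact congrArg c (Fin.ext (by simp; omega))
  have hsum' : ℓ j = ∑ s ∈ Finset.range k, w (d s) (d (s+1)) := by
    rw [hsum, Finset.sum_range fun s => w (d s) (d (s+1))]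
    apply Finset.sum_congr rfl
    intro q _
    have e1 : d (q : ℕ) = c q.castSucc :=
      (hdc q (by omega)).trans (congrArg c (Fin.ext rfl))
    have e2 : d ((q : ℕ) + 1) = c q.succ :=
      (hdc ((q : ℕ) + 1) (by omega)).trans (congrArg c (Fin.ext rfl))
    rw [e1, e2]
  by_cases hcase : ∃ t, t ≤ k ∧ d t = i
  · -- i lies on the heaviest path from j
    obtain ⟨t, htk, hdt⟩ := hcase
    -- the tail of the path from i
    set d2 : ℕ → Fin n := fun s => d (t + s) with hd2
    have hd2inj : ∀ a b, a ≤ k - t → b ≤ k - t → d2 a = d2 b → a = b := by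
      intro a b ha hb h
      have := hdinj (t + a) (t + b) (by omega) (by omega) h
      omega
    have htail := mem_pwf w (k - t) d2 hd2inj
    have hd20 : d2 0 = i := by rw [hd2]; simpa using hdt
    rw [hd20] at htail
    have htail_le : (∑ s ∈ Finset.range (k - t), w (d2 s) (d2 (s+1))) ≤ ℓ i :=
      (hℓ i).2 htail
    -- split the heaviest path into prefix and tail
    have hsplit : ℓ j = (∑ s ∈ Finset.range t, w (d s) (d (s+1))) +
        ∑ s ∈ Finset.range (k - t), w (d2 s) (d2 (s+1)) := by
      have hadd := Finset.sum_range_add (fun s => w (d s) (d (s+1))) t (k - t)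
      rw [Nat.add_sub_cancel' htk] at hadd
      rw [hsum', hadd]
      rfl
    -- the cycle prefix + arc (i, j) has nonpositive weight
    have hcyc := cycle_nonpos v X hLE t d (fun a b ha hb h => hdinj a b (by omega) (by omega) h)
    rw [hdt, hd0] at hcyc
    have hpre : (∑ s ∈ Finset.range t, (v (d s) (X (d (s+1))) - v (d s) (X (d s))))
        = ∑ s ∈ Finset.range t, w (d s) (d (s+1)) := rfl
    rw [hpre] at hcyc
    have hwij : w i j = v i (X j) - v i (X i) := rfl
    linarith [hsplit, htail_le, hcyc]
  · -- i is not on the path: prepend i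
    push_neg at hcase
    set d1 : ℕ → Fin n := fun s => if s = 0 then i else d (s - 1) with hd1
    have hd1inj : ∀ a b, a ≤ k + 1 → b ≤ k + 1 → d1 a = d1 b → a = b := by
      intro a b ha hb h
      rw [hd1] at h
      simp only at h
      rcases Nat.eq_zero_or_pos a with rfl | hA
      · rcases Nat.eq_zero_or_pos b with rfl | hB
        · rfl
        · rw [if_pos rfl, if_neg (by omega)] at h
          exact absurd h.symm (hcase (b - 1) (by omega))
      · rcases Nat.eq_zero_or_pos b with rfl | hB
        · rw [if_neg (by omega), if_pos rfl] at h
          exact absurd h (hcase (a - 1) (by omega))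
        · rw [if_neg (by omega), if_neg (by omega)] at h
          have := hdinj (a - 1) (b - 1) (by omega) (by omega) h
          omega
    have hmem := mem_pwf w (k + 1) d1 hd1inj
    have hd10 : d1 0 = i := rfl
    rw [hd10] at hmem
    have hval : (∑ s ∈ Finset.range (k + 1), w (d1 s) (d1 (s+1)))
        = w i j + ∑ s ∈ Finset.range k, w (d s) (d (s+1)) := by
      rw [Finset.sum_range_succ']
      have h1 : ∀ s, d1 (s + 1) = d s := by
        intro s
        rw [hd1]
        simp
      rw [add_comm]
      congr 1
      rw [hd10, h1, hd0]
    rw [hval, ← hsum'] at hmem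
    have hle : w i j + ℓ j ≤ ℓ i := (hℓ i).2 hmem
    have hwij : w i j = v i (X j) - v i (X i) := rfl
    linarith
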